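/- If a matrix A ∈ M_n(ℤ) with nonzero determinant is an s-th power in M_n(ℤ) for all but finitely many positive integers s, then A is the identity matrix. -/

import Mathlib

theorem stmt_1 (n : ℕ) (A : Matrix (Fin n) (Fin n) ℤ) (hA : A.det ≠ 0)
    (h : {s : ℕ | 0 < s ∧ ¬∃ B : Matrix (Fin n) (Fin n) ℤ, B ^ s = A}.Finite) :
    A = 1 := by
  obtain ⟨M, hM⟩ := h.bddAbove
  have key : ∀ s : ℕ, M < s → ∃ B : Matrix (Fin n) (Fin n) ℤ, B ^ s = A := by
    intro s hs
    by_contra hB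
    exact absurd (hM ⟨by omega, hB⟩) (not_le.mpr hs)
  -- Step 1: det A is a unit
  have hdet : IsUnit A.det := by
    obtain ⟨B, hB⟩ := key (M + A.det.natAbs + 1) (by omega)
    set s := M + A.det.natAbs + 1 with hs
    have h1 : B.det ^ s = A.det := by rw [← hB, Matrix.det_pow]
    have hBd : B.det ≠ 0 := by
      intro h0
      rw [h0, zero_pow (by omega)] at h1
      exact hA h1.symm
    rcases lt_or_ge B.det.natAbs 2 with hlt | hge
    · have : B.det.natAbs = 1 := by
        have := Int.natAbs_eq_zero.not.mpr hBd
        omega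
      rw [← h1]
      exact (Int.isUnit_iff_natAbs_eq.mpr this).pow s
    · exfalso
      have h2 : A.det.natAbs = B.det.natAbs ^ s := by
        rw [← h1, Int.natAbs_pow]
      have h3 : 2 ^ s ≤ B.det.natAbs ^ s := Nat.pow_le_pow_left hge s
      have h4 : s < 2 ^ s := Nat.lt_two_pow_self
      omega
  -- Step 2: reduction mod every prime is 1
  have hmodp : ∀ p : ℕ, p.Prime →
      (Int.castRingHom (ZMod p)).mapMatrix A = 1 := by
    intro p hp
    haveI : Fact p.Prime := ⟨hp⟩
    set N := Fintype.card (Matrix (Fin n) (Fin n) (ZMod p))ˣ with hN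
    have hNpos : 0 < N := Fintype.card_pos
    obtain ⟨B, hB⟩ := key (N * (M + 1)) (by nlinarith)
    have h1 : B.det ^ (N * (M + 1)) = A.det := by rw [← hB, Matrix.det_pow]
    have hBdet : IsUnit B.det :=
      isUnit_of_dvd_unit (h1 ▸ dvd_pow_self B.det (by positivity : N * (M+1) ≠ 0)) hdet
    have hBp : IsUnit ((Int.castRingHom (ZMod p)).mapMatrix B) := by
      rw [Matrix.isUnit_iff_isUnit_det, ← RingHom.map_det]
      exact hBdet.map _
    obtain ⟨u, hu⟩ := hBp
    have : (Int.castRingHom (ZMod p)).mapMatrix A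
        = ((u ^ N) ^ (M + 1) : (Matrix (Fin n) (Fin n) (ZMod p))ˣ) := by
      rw [← hB, map_pow, ← hu, ← pow_mul, ← Units.val_pow_eq_pow_val]
    rw [this, pow_card_eq_one, one_pow, Units.val_one]
  -- Step 3: conclude
  ext i j
  have hdvd : ∀ p : ℕ, p.Prime → (p : ℤ) ∣ (A i j - (1 : Matrix (Fin n) (Fin n) ℤ) i j) := by
    intro p hp
    have := congrFun (congrFun (hmodp p hp) i) j
    have h1 : ((A i j : ℤ) : ZMod p) = (((1 : Matrix (Fin n) (Fin n) ℤ) i j : ℤ) : ZMod p) := by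
      have hone : (Int.castRingHom (ZMod p)).mapMatrix (1 : Matrix (Fin n) (Fin n) ℤ) = 1 :=
        map_one _
      rw [RingHom.mapMatrix_apply] at this hone
      simpa [Matrix.map_apply] using this.trans (congrFun (congrFun hone.symm i) j)
    rw [← sub_eq_zero] at h1
    rw [← ZMod.intCast_zmod_eq_zero_iff_dvd]
    push_cast
    exact h1
  set x := A i j - (1 : Matrix (Fin n) (Fin n) ℤ) i j with hx
  obtain ⟨p, hple, hp⟩ := Nat.exists_infinite_primes (x.natAbs + 1)
  have := Int.eq_zero_of_dvd_of_natAbs_lt_natAbs (hdvd p hp) (by simpa using hple)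
  have : A i j = (1 : Matrix (Fin n) (Fin n) ℤ) i j := by omega
  exact this
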